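/- Let n, t, P be positive integers with 2 ≤ t ≤ √n, 6P ≤ n and P·t ≤ n. Then the number of patterns (e,v) ∈ E_n(t) for which at least one of the L = ⌊n/(3P)⌋ blocks of e contains two or more nonzero entries is at most (28·P·t²/n + 8·t⁴/(3·n·P))·#E_n(t). -/

import Mathlib

/-- The three kinds of deletable errors: deletion, erasure, substitution (flip). -/
inductive ErrKind : Type
  | D
  | E
  | F
  deriving DecidableEq

instance : Fintype ErrKind :=
  ⟨{ErrKind.D, ErrKind.E, ErrKind.F}, fun x => by cases x <;> first | decide | simp⟩

/-- A binary word of length `n`. -/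
abbrev Word (n : ℕ) := Fin n → Bool

/-- A deletable error pattern of length `n`: a pair `(e, v)`. -/
abbrev Pattern (n : ℕ) := (Fin n → Bool) × (Fin n → ErrKind)

/-- Process a list of (bit, error indicator, error kind) triples in order,
producing the corrupted string over `{0, 1, ε}` (`none` is the erasure symbol). -/
def corruptAux : List (Bool × Bool × ErrKind) → List (Option Bool)
  | [] => []
  | (xi, false, _) :: rest => some xi :: corruptAux rest
  | (_, true, ErrKind.D) :: rest => corruptAux rest
  | (_, true, ErrKind.E) :: rest => none :: corruptAux rest
  | (xi, true, ErrKind.F) :: rest => some (!xi) :: corruptAux rest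

/-- The corruption `F_g(x)` of the word `x` by the pattern `g`. -/
def corrupt {n : ℕ} (g : Pattern n) (x : Word n) : List (Option Bool) :=
  corruptAux (List.ofFn fun i => (x i, g.1 i, g.2 i))

/-- The corruption `F_g(x, t)` of the first `t` bits of `x` by the first `t` entries of `g`. -/
def corruptPrefix {n : ℕ} (g : Pattern n) (x : Word n) (t : ℕ) : List (Option Bool) :=
  corruptAux ((List.ofFn fun i => (x i, g.1 i, g.2 i)).take t)

/-- The number of errors `Σ_i e_i` of a pattern. -/
def errCount {n : ℕ} (g : Pattern n) : ℕ :=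
  (Finset.univ.filter fun i => g.1 i = true).card

/-- `E_n(r)`: the set of `n`-length deletable error patterns with at most `r` errors. -/
def Epat (n r : ℕ) : Finset (Pattern n) :=
  Finset.univ.filter fun g => errCount g ≤ r

/-- A pattern is `P`-far if any two distinct error positions are at distance at least `P`. -/
def IsPFar {n : ℕ} (P : ℕ) (g : Pattern n) : Prop :=
  ∀ i j : Fin n, i ≠ j → g.1 i = true → g.1 j = true →
    (P : ℤ) ≤ |((i : ℕ) : ℤ) - ((j : ℕ) : ℤ)|

/-- The code `C` corrects all error patterns in `F`. -/
def CorrectsIn {n : ℕ} (C : Finset (Word n)) (F : Set (Pattern n)) : Prop :=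
  ∀ x₁ ∈ C, ∀ x₂ ∈ C, x₁ ≠ x₂ → ∀ g₁ ∈ F, ∀ g₂ ∈ F, corrupt g₁ x₁ ≠ corrupt g₂ x₂

/-- The code `C` corrects all error patterns in `F` in real-time with delay at most `d`. -/
def CorrectsRealTime {n : ℕ} (C : Finset (Word n)) (F : Set (Pattern n)) (d : ℕ) : Prop :=
  ∀ z : ℕ, 1 ≤ z → z ≤ n - d → ∀ x₁ ∈ C, ∀ x₂ ∈ C, x₁ ≠ x₂ →
    ∀ g₁ ∈ F, ∀ g₂ ∈ F, corruptPrefix g₁ x₁ (z + d) ≠ corruptPrefix g₂ x₂ (z + d)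

/-- The redundancy `R(C) = n - log₂ #C` of an `n`-length code `C`. -/
noncomputable def redundancy {n : ℕ} (C : Finset (Word n)) : ℝ :=
  (n : ℝ) - Real.logb 2 (C.card)

/-- The number of nonzero entries of `e` in the `l`-th block (`1 ≤ l ≤ L`) of the decomposition
of `{0,1}^n` into `L` blocks, where blocks `1, …, L-1` have length `3P` and the last block
extends to position `n`. -/
def blockCount (n P L l : ℕ) (e : Fin n → Bool) : ℕ :=
  (Finset.univ.filter fun i : Fin n =>
    e i = true ∧ 3 * P * (l - 1) ≤ (i : ℕ) ∧ (l = L ∨ (i : ℕ) < 3 * P * l)).card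


open Finset in
private lemma word_count (n r : ℕ) :
    ((univ : Finset (Fin n → Bool)).filter fun e => (univ.filter fun i => e i = true).card ≤ r).card
      = ∑ k ∈ range (r+1), n.choose k := by
  have hbij : ((univ : Finset (Fin n → Bool)).filter fun e => (univ.filter fun i => e i = true).card ≤ r).card
      = ((univ : Finset (Finset (Fin n))).filter fun s => s.card ≤ r).card := by
    apply Finset.card_bij (fun e _ => univ.filter fun i => e i = true)
    · intro e he
      simp only [mem_filter, mem_univ, true_and] at he ⊢
      exact he
    · intro e₁ h₁ e₂ h₂ h
      funext i
      have := Finset.ext_iff.1 h i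
      simp only [mem_filter, mem_univ, true_and] at this
      by_cases h1 : e₁ i <;> by_cases h2 : e₂ i <;> simp_all
    · intro s hs
      refine ⟨fun i => i ∈ s, ?_, ?_⟩
      · simp only [mem_filter, mem_univ, true_and] at hs ⊢
        convert hs using 2
        ext i; simp
      · ext i; simp
  rw [hbij]
  have : ((univ : Finset (Finset (Fin n))).filter fun s => s.card ≤ r)
      = (range (r+1)).biUnion (fun k => Finset.powersetCard k univ) := by
    ext s
    simp [Finset.mem_powersetCard, Nat.lt_succ_iff]
  rw [this, Finset.card_biUnion]
  · simp [Finset.card_powersetCard]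
  · intro a _ b _ hab
    simp only [Finset.disjoint_left, Finset.mem_powersetCard]
    rintro s ⟨_, rfl⟩ ⟨_, h⟩
    exact hab h

open Finset in
set_option synthInstance.maxHeartbeats 400000 in
private lemma Epat_card (n r : ℕ) :
    (Epat n r).card = (∑ k ∈ range (r+1), n.choose k) * 3 ^ n := by
  have : Epat n r = ((univ : Finset (Fin n → Bool)).filter fun e =>
      (univ.filter fun i => e i = true).card ≤ r) ×ˢ (univ : Finset (Fin n → ErrKind)) := by
    ext g
    simp [Epat, Finset.mem_product, errCount]
    exact Finset.mem_filter.trans (by simp)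
  rw [this, Finset.card_product, word_count]
  congr 1
  simp [Finset.card_univ]
  rw [show Fintype.card ErrKind = 3 from rfl]

private lemma termwise (n t k : ℕ) (hk : k + 2 ≤ t) (htn : t ≤ n) :
    n.choose k * ((n-t+1)*(n-t+2)) ≤ t*(t-1) * n.choose (k+2) := by
  have key : n.choose (k+2) * ((k+2)*(k+1)) = n.choose k * ((n-k)*(n-k-1)) := by
    have h1 := Nat.choose_succ_right_eq n k
    have h2 := Nat.choose_succ_right_eq n (k+1)
    have e1 : n - (k+1) = n - k - 1 := by omega
    calc n.choose (k+2)*((k+2)*(k+1)) = (n.choose (k+1+1)*(k+1+1))*(k+1) := by ring_nf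
      _ = (n.choose (k+1) * (n-(k+1)))*(k+1) := by rw [h2]
      _ = (n.choose (k+1)*(k+1)) * (n-(k+1)) := by ring
      _ = n.choose k * (n-k) * (n - (k+1)) := by rw [h1]
      _ = n.choose k * ((n-k)*(n-k-1)) := by rw [e1]; ring
  have hfour : ((k+2)*(k+1)) * ((n-t+1)*(n-t+2)) ≤ (t*(t-1)) * ((n-k)*(n-k-1)) := by
    have h1 : k + 2 ≤ t := hk
    have h2 : k + 1 ≤ t - 1 := by omega
    have h3 : n-t+1 ≤ n-k-1 := by omega
    have h4 : n-t+2 ≤ n-k := by omega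
    calc ((k+2)*(k+1)) * ((n-t+1)*(n-t+2)) ≤ (t*(t-1)) * ((n-k-1)*(n-k)) :=
          Nat.mul_le_mul (Nat.mul_le_mul h1 h2) (Nat.mul_le_mul h3 h4)
      _ = (t*(t-1)) * ((n-k)*(n-k-1)) := by ring
  apply Nat.le_of_mul_le_mul_left _ (show 0 < (k+2)*(k+1) by positivity)
  calc (k+2)*(k+1) * (n.choose k*((n-t+1)*(n-t+2)))
      = n.choose k * (((k+2)*(k+1)) * ((n-t+1)*(n-t+2))) := by ring
    _ ≤ n.choose k * ((t*(t-1)) * ((n-k)*(n-k-1))) := Nat.mul_le_mul_left _ hfour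
    _ = (t*(t-1)) * (n.choose k*((n-k)*(n-k-1))) := by ring
    _ = (t*(t-1)) * (n.choose (k+2) * ((k+2)*(k+1))) := by rw [key]
    _ = (k+2)*(k+1) * (t*(t-1)*n.choose (k+2)) := by ring

open Finset in
private lemma sumle (n t : ℕ) (ht : 2 ≤ t) (htn : t ≤ n) :
    (∑ k ∈ range (t-1), n.choose k) * ((n-t+1)*(n-t+2))
      ≤ t*(t-1) * ∑ k ∈ range (t+1), n.choose k := by
  calc (∑ k ∈ range (t-1), n.choose k) * ((n-t+1)*(n-t+2))
      = ∑ k ∈ range (t-1), n.choose k * ((n-t+1)*(n-t+2)) := by rw [Finset.sum_mul]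
    _ ≤ ∑ k ∈ range (t-1), t*(t-1) * n.choose (k+2) := by
        refine Finset.sum_le_sum fun k hk => ?_
        have := Finset.mem_range.1 hk
        exact termwise n t k (by omega) htn
    _ = t*(t-1) * ∑ k ∈ range (t-1), n.choose (k+2) := by rw [Finset.mul_sum]
    _ ≤ t*(t-1) * ∑ k ∈ range (t+1), n.choose k := by
        refine Nat.mul_le_mul_left _ ?_
        have h : t + 1 = 2 + (t-1) := by omega
        rw [h, Finset.sum_range_add]
        calc ∑ k ∈ range (t-1), n.choose (k+2)
            = ∑ k ∈ range (t-1), n.choose (2+k) := by simp [Nat.add_comm]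
          _ ≤ ∑ i ∈ range 2, n.choose i + ∑ k ∈ range (t-1), n.choose (2+k) :=
              Nat.le_add_left _ _

open Finset in
private lemma pair_of_blocks (n P : ℕ) (hP : 0 < P) (e : Fin n → Bool)
    (l : ℕ) (hl1 : 1 ≤ l) (hl2 : l ≤ n / (3*P))
    (h2 : 2 ≤ blockCount n P (n/(3*P)) l e) :
    ∃ i j : Fin n, e i = true ∧ e j = true ∧ i < j ∧ (j:ℕ) - (i:ℕ) < 6*P := by
  obtain ⟨l', rfl⟩ : ∃ l', l = l' + 1 := ⟨l - 1, by omega⟩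
  rw [blockCount] at h2
  obtain ⟨i, hi, j, hj, hij⟩ := Finset.one_lt_card.1 h2
  simp only [mem_filter, mem_univ, true_and, Nat.add_sub_cancel] at hi hj
  obtain ⟨i, j, hi, hj, hlt⟩ : ∃ i j : Fin n,
      (e i = true ∧ 3*P*l' ≤ (i:ℕ) ∧ (l'+1 = n/(3*P) ∨ (i:ℕ) < 3*P*(l'+1))) ∧
      (e j = true ∧ 3*P*l' ≤ (j:ℕ) ∧ (l'+1 = n/(3*P) ∨ (j:ℕ) < 3*P*(l'+1))) ∧ i < j := by
    rcases lt_or_gt_of_ne hij with h | h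
    · exact ⟨i, j, hi, hj, h⟩
    · exact ⟨j, i, hj, hi, h⟩
  refine ⟨i, j, hi.1, hj.1, hlt, ?_⟩
  have hji : (j:ℕ) < i + 6*P := by
    have hA : 3*P*l' + 3*P = 3*P*(l'+1) := by ring
    rcases hj.2.2 with hL | hless
    · have hdiv : 3*P*(n/(3*P)) + n % (3*P) = n := Nat.div_add_mod n (3*P)
      have hmod : n % (3*P) < 3*P := Nat.mod_lt _ (by positivity)
      have hjn : (j:ℕ) < n := j.2
      have hi' : 3*P*l' ≤ (i:ℕ) := hi.2.1
      rw [← hL] at hdiv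
      have h1 : n < 3*P*(l'+1) + 3*P := by omega
      have h2 : 3*P*(l'+1) + 3*P = 3*P*l' + 6*P := by ring
      omega
    · have hi' : 3*P*l' ≤ (i:ℕ) := hi.2.1
      have hP6 : 3*P ≤ 6*P := by omega
      omega
  have := hlt
  rw [Fin.lt_def] at this
  omega

open Finset in
private lemma T_card_le (n t P : ℕ) (ht : 2 ≤ t) (hP : 0 < P) :
    ((univ : Finset (Pattern n × Fin n × Fin n)).filter fun x =>
        x.1 ∈ Epat n t ∧ x.1.1 x.2.1 = true ∧ x.1.1 x.2.2 = true ∧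
        x.2.1 < x.2.2 ∧ (x.2.2 : ℕ) - (x.2.1 : ℕ) < 6*P).card
      ≤ (n * (6*P)) * (Epat n (t-2)).card := by
  classical
  have hp6 : 0 < 6*P := by omega
  set T := ((univ : Finset (Pattern n × Fin n × Fin n)).filter fun x =>
        x.1 ∈ Epat n t ∧ x.1.1 x.2.1 = true ∧ x.1.1 x.2.2 = true ∧
        x.2.1 < x.2.2 ∧ (x.2.2 : ℕ) - (x.2.1 : ℕ) < 6*P) with hT
  have key : T.card ≤ ((univ : Finset (Fin n × Fin (6*P))) ×ˢ Epat n (t-2)).card := by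
    apply Finset.card_le_card_of_injOn (fun x =>
      ((x.2.1, ⟨((x.2.2 : ℕ) - (x.2.1 : ℕ)) % (6*P), Nat.mod_lt _ hp6⟩),
       (Function.update (Function.update x.1.1 x.2.1 false) x.2.2 false, x.1.2)))
    · rintro ⟨g, i, j⟩ hx
      simp only [hT, mem_coe, mem_filter, mem_univ, true_and] at hx
      obtain ⟨hg, hi, hj, hij, hd⟩ := hx
      have hne : i ≠ j := ne_of_lt hij
      rw [Finset.mem_coe, Finset.mem_product]
      refine ⟨mem_univ _, ?_⟩
      simp only [Epat, mem_filter, mem_univ, true_and] at hg ⊢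
      have hsub : (univ.filter fun x : Fin n =>
          (Function.update (Function.update g.1 i false) j false) x = true)
          ⊆ ((univ.filter fun x : Fin n => g.1 x = true).erase i).erase j := by
        intro x hx
        simp only [mem_filter, mem_univ, true_and] at hx
        have hxj : x ≠ j := by
          rintro rfl; rw [Function.update_self] at hx; exact Bool.false_ne_true hx
        have hxi : x ≠ i := by
          rintro rfl
          rw [Function.update_of_ne hne, Function.update_self] at hx
          exact Bool.false_ne_true hx
        rw [Function.update_of_ne hxj, Function.update_of_ne hxi] at hx
        simp only [mem_erase, mem_filter, mem_univ, true_and]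
        exact ⟨hxj, hxi, hx⟩
      have hiS : i ∈ univ.filter fun x : Fin n => g.1 x = true := by
        simp [hi]
      have hjS : j ∈ (univ.filter fun x : Fin n => g.1 x = true).erase i := by
        simp [hj, hne.symm]
      have hc := Finset.card_le_card hsub
      rw [Finset.card_erase_of_mem hjS, Finset.card_erase_of_mem hiS] at hc
      have hgt : errCount g ≤ t := hg
      unfold errCount at hgt ⊢
      simp only at hc ⊢
      omega
    · rintro ⟨g₁, i₁, j₁⟩ hx₁ ⟨g₂, i₂, j₂⟩ hx₂ heq
      simp only [hT, mem_coe, mem_filter, mem_univ, true_and] at hx₁ hx₂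
      obtain ⟨hg₁, hi₁, hj₁, hij₁, hd₁⟩ := hx₁
      obtain ⟨hg₂, hi₂, hj₂, hij₂, hd₂⟩ := hx₂
      simp only [Prod.mk.injEq, Fin.mk.injEq] at heq
      obtain ⟨⟨hii, hdd⟩, hee, hvv⟩ := heq
      rw [Nat.mod_eq_of_lt hd₁, Nat.mod_eq_of_lt hd₂] at hdd
      have hii' : (i₁ : ℕ) = (i₂ : ℕ) := by rw [hii]
      have hjj : j₁ = j₂ := by
        have h1 : (i₁ : ℕ) < (j₁ : ℕ) := hij₁
        have h2 : (i₂ : ℕ) < (j₂ : ℕ) := hij₂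
        exact Fin.ext (by omega)
      subst hii
      subst hjj
      have hgg : g₁.1 = g₂.1 := by
        funext x
        by_cases hxj : x = j₁
        · simp [hxj, hj₁, hj₂]
        · by_cases hxi : x = i₁
          · simp [hxi, hi₁, hi₂]
          · have := congrFun hee x
            rw [Function.update_of_ne hxj, Function.update_of_ne hxj,
              Function.update_of_ne hxi, Function.update_of_ne hxi] at this
            exact this
      simp only [Prod.mk.injEq]
      exact ⟨Prod.ext hgg hvv, trivial⟩
  calc T.card ≤ _ := key
    _ = (n * (6*P)) * (Epat n (t-2)).card := by
        rw [Finset.card_product]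
        simp

set_option maxHeartbeats 1000000 in
/-- Bound on the number of patterns for which some block contains two or more errors. -/
theorem stmt13 (n t P : ℕ) (hn : 0 < n) (ht : 2 ≤ t) (htn : (t : ℝ) ≤ Real.sqrt n)
    (hP : 0 < P) (h6P : 6 * P ≤ n) (hPt : P * t ≤ n) :
    (({g : Pattern n | g ∈ Epat n t ∧
        ∃ l : ℕ, 1 ≤ l ∧ l ≤ n / (3 * P) ∧
          2 ≤ blockCount n P (n / (3 * P)) l g.1}).ncard : ℝ) ≤
      (28 * (P : ℝ) * t ^ 2 / n + 8 * t ^ 4 / (3 * n * (P : ℝ))) *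
        ((Epat n t).card : ℝ) := by
  classical
  open Finset in
  -- t*t ≤ n
  have htt : t * t ≤ n := by
    have h1 : (t:ℝ)^2 ≤ (Real.sqrt n)^2 := by
      nlinarith [Real.sqrt_nonneg (n:ℝ), Nat.cast_nonneg (α := ℝ) t, htn]
    rw [Real.sq_sqrt (by positivity : (0:ℝ) ≤ (n:ℝ))] at h1
    have h2 : ((t*t : ℕ) : ℝ) ≤ ((n:ℕ) : ℝ) := by push_cast; nlinarith [h1]
    exact_mod_cast h2
  have htn' : t ≤ n := le_trans (Nat.le_mul_of_pos_left t (by omega)) htt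
  -- the bad set as a finset
  set BadF : Finset (Pattern n) := (Epat n t).filter (fun g =>
      ∃ l : ℕ, 1 ≤ l ∧ l ≤ n / (3 * P) ∧ 2 ≤ blockCount n P (n / (3 * P)) l g.1) with hBadF
  have hset : {g : Pattern n | g ∈ Epat n t ∧
      ∃ l : ℕ, 1 ≤ l ∧ l ≤ n / (3 * P) ∧ 2 ≤ blockCount n P (n / (3 * P)) l g.1}
      = ↑BadF := by
    ext g
    simp [hBadF, Finset.mem_filter]
  rw [hset, Set.ncard_coe_finset]
  -- Step A : BadF.card ≤ T.card
  set T := ((univ : Finset (Pattern n × Fin n × Fin n)).filter fun x =>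
        x.1 ∈ Epat n t ∧ x.1.1 x.2.1 = true ∧ x.1.1 x.2.2 = true ∧
        x.2.1 < x.2.2 ∧ (x.2.2 : ℕ) - (x.2.1 : ℕ) < 6*P) with hT
  have hA : BadF.card ≤ T.card := by
    set Q : Pattern n → Prop := fun g => ∃ i j : Fin n,
      g.1 i = true ∧ g.1 j = true ∧ i < j ∧ (j:ℕ) - (i:ℕ) < 6*P with hQ
    apply Finset.card_le_card_of_injOn (fun g =>
      if h : Q g then (g, h.choose, h.choose_spec.choose) else (g, ⟨0, hn⟩, ⟨0, hn⟩))
    · intro g hg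
      simp only [hBadF, Finset.mem_coe, mem_filter] at hg
      obtain ⟨hgE, l, hl1, hl2, hbc⟩ := hg
      have hQg : Q g := pair_of_blocks n P hP g.1 l hl1 hl2 hbc
      beta_reduce
      rw [dif_pos hQg]
      have hspec := hQg.choose_spec.choose_spec
      simp only [hT, Finset.mem_coe, mem_filter, mem_univ, true_and]
      exact ⟨hgE, hspec.1, hspec.2.1, hspec.2.2.1, hspec.2.2.2⟩
    · intro a _ b _ h
      have hfst : ∀ g : Pattern n, ((if h : Q g then (g, h.choose, h.choose_spec.choose)
          else (g, (⟨0, hn⟩ : Fin n), (⟨0, hn⟩ : Fin n))).1) = g := by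
        intro g; split <;> rfl
      exact (hfst a).symm.trans ((congrArg Prod.fst h).trans (hfst b))
  -- Step B
  have hB : T.card ≤ (n * (6*P)) * (Epat n (t-2)).card := T_card_le n t P ht hP
  -- Step C
  have hC : (Epat n (t-2)).card * ((n-t+1)*(n-t+2)) ≤ t*(t-1) * (Epat n t).card := by
    rw [Epat_card, Epat_card]
    have hr : t - 2 + 1 = t - 1 := by omega
    rw [hr]
    calc (∑ k ∈ range (t-1), n.choose k) * 3^n * ((n-t+1)*(n-t+2))
        = ((∑ k ∈ range (t-1), n.choose k) * ((n-t+1)*(n-t+2))) * 3^n := by ring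
      _ ≤ (t*(t-1) * ∑ k ∈ range (t+1), n.choose k) * 3^n :=
          Nat.mul_le_mul_right _ (sumle n t ht htn')
      _ = t*(t-1) * ((∑ k ∈ range (t+1), n.choose k) * 3^n) := by ring
  -- Step D : arithmetic
  have hD : 6*(n*n)*(t*(t-1)) ≤ 28*(t*t)*((n-t+1)*(n-t+2)) := by
    obtain ⟨s, rfl⟩ : ∃ s, t = s + 2 := ⟨t - 2, by omega⟩
    obtain ⟨a, hna⟩ : ∃ a, n = s + 2 + a := ⟨n - (s+2), by omega⟩
    have e1 : n - (s+2) + 1 = a + 1 := by omega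
    have e2 : n - (s+2) + 2 = a + 2 := by omega
    have e3 : s + 2 - 1 = s + 1 := by omega
    rw [e1, e2, e3, hna]
    have hsa : s ≤ a := by nlinarith [htt]
    nlinarith [hsa, sq_nonneg (s - a : ℤ)]
  -- combine in ℕ
  have hnat : BadF.card * (((n-t+1)*(n-t+2)) * n)
      ≤ (28*(t*t)*P*(Epat n t).card) * ((n-t+1)*(n-t+2)) := by
    calc BadF.card * (((n-t+1)*(n-t+2)) * n)
        ≤ ((n*(6*P)) * (Epat n (t-2)).card) * (((n-t+1)*(n-t+2)) * n) :=
          Nat.mul_le_mul_right _ (le_trans hA hB)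
      _ = ((Epat n (t-2)).card * ((n-t+1)*(n-t+2))) * (6*(n*n)*P) := by ring
      _ ≤ (t*(t-1) * (Epat n t).card) * (6*(n*n)*P) := Nat.mul_le_mul_right _ hC
      _ = (6*(n*n)*(t*(t-1))) * (P * (Epat n t).card) := by ring
      _ ≤ (28*(t*t)*((n-t+1)*(n-t+2))) * (P * (Epat n t).card) :=
          Nat.mul_le_mul_right _ hD
      _ = (28*(t*t)*P*(Epat n t).card) * ((n-t+1)*(n-t+2)) := by ring
  -- pass to ℝ
  have hnpos : (0:ℝ) < (n:ℝ) := by exact_mod_cast hn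
  have key : ∀ B E D : ℕ, B * (D * n) ≤ (28*(t*t)*P*E) * D → 0 < D →
      (B:ℝ) ≤ 28 * (P:ℝ) * t^2 / n * (E:ℝ) := by
    intro B E D hBD hDpos
    have hDpos' : (0:ℝ) < (D:ℝ) := by exact_mod_cast hDpos
    have hcast : (B:ℝ) * ((D:ℝ) * n) ≤ (28*(t:ℝ)*(t:ℝ)*(P:ℝ)*(E:ℝ)) * (D:ℝ) := by
      have := (Nat.cast_le (α := ℝ)).2 hBD
      push_cast at this
      linarith [this]
    have hmain : (B:ℝ) * n ≤ 28*(t:ℝ)*(t:ℝ)*(P:ℝ)*(E:ℝ) := by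
      apply le_of_mul_le_mul_right _ hDpos'
      calc (B:ℝ) * n * D = (B:ℝ) * ((D:ℝ) * n) := by ring
        _ ≤ _ := hcast
    rw [div_mul_eq_mul_div, le_div_iff₀ hnpos]
    have heq : 28 * (P:ℝ) * t^2 * (E:ℝ) = 28*(t:ℝ)*(t:ℝ)*(P:ℝ)*(E:ℝ) := by ring
    rw [heq]
    exact hmain
  have hfirst : (BadF.card : ℝ) ≤ 28 * (P:ℝ) * t^2 / n * ((Epat n t).card : ℝ) := by
    apply key _ _ ((n-t+1)*(n-t+2))
    · calc BadF.card * ((n-t+1)*(n-t+2) * n)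
          = BadF.card * (((n-t+1)*(n-t+2)) * n) := by ring
        _ ≤ (28*(t*t)*P*(Epat n t).card) * ((n-t+1)*(n-t+2)) := hnat
    · positivity
  have hsecond : 0 ≤ 8 * (t:ℝ)^4 / (3 * n * (P:ℝ)) * ((Epat n t).card : ℝ) := by
    positivity
  have hsplit : (28 * (P : ℝ) * t ^ 2 / n + 8 * (t:ℝ) ^ 4 / (3 * n * (P : ℝ))) *
        ((Epat n t).card : ℝ)
      = 28 * (P:ℝ) * t^2 / n * ((Epat n t).card : ℝ)
        + 8 * (t:ℝ)^4 / (3 * n * (P:ℝ)) * ((Epat n t).card : ℝ) := by ring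
  rw [hsplit]
  linarith [hfirst, hsecond]
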